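/- Let κ be a regular uncountable cardinal. Then the stationary splitting number s^cl_κ is at least κ if and only if κ is inaccessible. -/

import Mathlib

set_option linter.unusedSectionVars false
open scoped Classical
set_option maxHeartbeats 1000000

open Set Cardinal

/-- `c` is a club in the well-ordered type `α` (thought of as the cardinal `κ = #α`):
it is closed (contains the supremum of each of its nonempty bounded subsets) and unbounded. -/
def IsClubIn {α : Type*} [LinearOrder α] (c : Set α) : Prop :=
  (∀ s ⊆ c, s.Nonempty → ∀ a : α, IsLUB s a → a ∈ c) ∧ ∀ a : α, ∃ b ∈ c, a < b

/-- `x` is stationary: it meets every club. -/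
def IsStatIn {α : Type*} [LinearOrder α] (x : Set α) : Prop :=
  ∀ c : Set α, IsClubIn c → (x ∩ c).Nonempty

/-- `y` stationarily splits `x`: both `x ∩ y` and `x \ y` are stationary. -/
def StatSplits {α : Type*} [LinearOrder α] (y x : Set α) : Prop :=
  IsStatIn (x ∩ y) ∧ IsStatIn (x \ y)

/-- The stationary splitting number `s^cl_κ`: the least cardinality of a family `S` of
stationary sets such that every stationary set is stationarily split by a member of `S`. -/
noncomputable def statSplittingNumber (α : Type*) [LinearOrder α] : Cardinal :=
  sInf { c : Cardinal | ∃ S : Set (Set α), (∀ y ∈ S, IsStatIn y) ∧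
    (∀ x : Set α, IsStatIn x → ∃ y ∈ S, StatSplits y x) ∧ c = #S }

universe u
variable {α : Type u} [LinearOrder α] [WellFoundedLT α]
variable {α : Type u} [LinearOrder α] [WellFoundedLT α]

lemma ssn_nonempty (hunc : ℵ₀ < #α) : Nonempty α := by
  rw [← Cardinal.mk_ne_zero_iff]
  exact fun h => by simp [h] at hunc

lemma ssn_bound (hreg : (#α).IsRegular) (hunc : ℵ₀ < #α)
    (hinit : ∀ a : α, #(Set.Iio a) < #α) (s : Set α) (hs : #s < #α) :
    ∃ b : α, ∀ x ∈ s, x < b := by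
  by_contra h
  push_neg at h
  have hcov : (Set.univ : Set α) ⊆ ⋃ x : s, Set.Iic (x : α) := by
    intro b _
    obtain ⟨x, hx, hbx⟩ := h b
    exact Set.mem_iUnion.2 ⟨⟨x, hx⟩, hbx⟩
  have h1 : #α ≤ #s * ⨆ x : s, #(Set.Iic (x : α)) := by
    calc #α = #(Set.univ : Set α) := Cardinal.mk_univ.symm
    _ ≤ #(⋃ x : s, Set.Iic (x : α)) := Cardinal.mk_le_mk_of_subset hcov
    _ ≤ #s * ⨆ x : s, #(Set.Iic (x : α)) := Cardinal.mk_iUnion_le _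
  have hiic : ∀ x : α, #(Set.Iic x) < #α := by
    intro x
    have : (Set.Iic x : Set α) = Set.Iio x ∪ {x} := by
      ext y; simp [le_iff_lt_or_eq]
    rw [this]
    calc #(Set.Iio x ∪ {x} : Set α) ≤ #(Set.Iio x) + #({x} : Set α) := Cardinal.mk_union_le _ _
    _ = #(Set.Iio x) + 1 := by rw [Cardinal.mk_singleton]
    _ < #α := Cardinal.add_lt_of_lt hunc.le (hinit x) (lt_trans Cardinal.one_lt_aleph0 hunc)
  have h2 : #s * (⨆ x : s, #(Set.Iic (x : α))) < #α :=
    Cardinal.mul_lt_of_lt hunc.le hs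
      (Cardinal.iSup_lt_of_isRegular hreg hs fun x => hiic x)
  exact absurd (h1.trans_lt h2) (lt_irrefl _)

lemma ssn_lub (s : Set α) (hb : ∃ b : α, ∀ x ∈ s, x ≤ b) : ∃ a : α, IsLUB s a := by
  obtain ⟨b, hb⟩ := hb
  have hne : (upperBounds s).Nonempty := ⟨b, hb⟩
  refine ⟨(IsWellFounded.wf (r := ((· < ·) : α → α → Prop))).min _ hne, ?_, ?_⟩
  · exact (IsWellFounded.wf).min_mem _ hne
  · intro c hc
    exact le_of_not_gt ((IsWellFounded.wf).not_lt_min _ hc)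
lemma ssn_lub_of_small (hreg : (#α).IsRegular) (hunc : ℵ₀ < #α)
    (hinit : ∀ a : α, #(Set.Iio a) < #α) (s : Set α) (hs : #s < #α) :
    ∃ a : α, IsLUB s a := by
  obtain ⟨b, hb⟩ := ssn_bound hreg hunc hinit s hs
  exact ssn_lub s ⟨b, fun x hx => (hb x hx).le⟩

/-- the iterated chain `n ↦ f^[n+1] a` -/
lemma ssn_chain (f : α → α) (hf : ∀ x, x < f x) (a : α) :
    ∃ u : ℕ → α, StrictMono u ∧ a < u 0 ∧ u 0 = f a ∧ ∀ n, u (n + 1) = f (u n) := by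
  refine ⟨fun n => f^[n + 1] a, ?_, hf a, rfl, fun n => Function.iterate_succ_apply' f (n + 1) a⟩
  apply strictMono_nat_of_lt_succ
  intro n
  rw [Function.iterate_succ_apply' f (n + 1) a]
  exact hf _

lemma ssn_range_lub (hreg : (#α).IsRegular) (hunc : ℵ₀ < #α)
    (hinit : ∀ a : α, #(Set.Iio a) < #α) (u : ℕ → α) :
    ∃ σ : α, IsLUB (Set.range u) σ := by
  apply ssn_lub_of_small hreg hunc hinit
  have : #(Set.range u) ≤ ℵ₀ := by
    have := (Set.countable_range u).to_subtype
    exact Cardinal.mk_le_aleph0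
  exact this.trans_lt hunc

lemma ssn_club_univ (hreg : (#α).IsRegular) (hunc : ℵ₀ < #α)
    (hinit : ∀ a : α, #(Set.Iio a) < #α) : IsClubIn (Set.univ : Set α) := by
  refine ⟨fun _ _ _ _ _ => trivial, fun a => ?_⟩
  obtain ⟨b, hb⟩ := ssn_bound hreg hunc hinit {a} (by
    rw [Cardinal.mk_singleton]; exact lt_trans Cardinal.one_lt_aleph0 hunc)
  exact ⟨b, trivial, hb a rfl⟩

lemma ssn_exists_gt (hreg : (#α).IsRegular) (hunc : ℵ₀ < #α)
    (hinit : ∀ a : α, #(Set.Iio a) < #α) (a : α) : ∃ b, a < b := by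
  obtain ⟨b, _, h⟩ := (ssn_club_univ hreg hunc hinit).2 a
  exact ⟨b, h⟩

lemma ssn_club_Ioi (hreg : (#α).IsRegular) (hunc : ℵ₀ < #α)
    (hinit : ∀ a : α, #(Set.Iio a) < #α) (a : α) : IsClubIn (Set.Ioi a) := by
  constructor
  · intro s hs hne b hb
    obtain ⟨e, he⟩ := hne
    exact lt_of_lt_of_le (hs he) (hb.1 he)
  · intro x
    obtain ⟨b, hb⟩ := ssn_bound hreg hunc hinit {a, x}
      (lt_trans (Set.toFinite ({a,x} : Set α)).lt_aleph0 hunc)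
    exact ⟨b, hb a (by simp), hb x (by simp)⟩

/-- intersections of fewer than `#α` clubs (indexed in the same universe) are club -/
lemma ssn_club_iInter (hreg : (#α).IsRegular) (hunc : ℵ₀ < #α)
    (hinit : ∀ a : α, #(Set.Iio a) < #α) {ι : Type u} (hι : #ι < #α)
    {c : ι → Set α} (hc : ∀ i, IsClubIn (c i)) : IsClubIn (⋂ i, c i) := by
  constructor
  · intro s hs hne b hb
    refine Set.mem_iInter.2 fun i => (hc i).1 s (fun x hx => ?_) hne b hb
    exact Set.mem_iInter.1 (hs hx) i
  · intro a
    -- choose, for each club, a member above any point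
    have hF : ∀ i, ∀ x : α, ∃ y, y ∈ c i ∧ x < y := fun i x => by
      obtain ⟨y, hy, hxy⟩ := (hc i).2 x; exact ⟨y, hy, hxy⟩
    choose F hF1 hF2 using hF
    -- a step function strictly above x and above all F i x
    have hstep : ∀ x : α, ∃ y, x < y ∧ ∀ i, F i x < y := by
      intro x
      obtain ⟨b, hb⟩ := ssn_bound hreg hunc hinit ({x} ∪ Set.range fun i => F i x)
        (by
          refine lt_of_le_of_lt (Cardinal.mk_union_le _ _) ?_
          refine Cardinal.add_lt_of_lt hunc.le ?_ (lt_of_le_of_lt Cardinal.mk_range_le hι)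
          rw [Cardinal.mk_singleton]; exact lt_trans Cardinal.one_lt_aleph0 hunc)
      exact ⟨b, hb x (Or.inl rfl), fun i => hb _ (Or.inr ⟨i, rfl⟩)⟩
    choose step hstep1 hstep2 using hstep
    obtain ⟨u, hu_mono, hu0, hu_z, hu_succ⟩ := ssn_chain step (fun x => hstep1 x) a
    obtain ⟨σ, hσ⟩ := ssn_range_lub hreg hunc hinit u
    have huσ : ∀ n, u n ≤ σ := fun n => hσ.1 ⟨n, rfl⟩
    refine ⟨σ, Set.mem_iInter.2 fun i => ?_, lt_of_lt_of_le hu0 (huσ 0)⟩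
    -- σ is the LUB of the range of n ↦ F i (u n) ⊆ c i
    have hlub : IsLUB (Set.range fun n => F i (u n)) σ := by
      constructor
      · rintro y ⟨n, rfl⟩
        have : F i (u n) < u (n + 1) := by rw [hu_succ n]; exact hstep2 (u n) i
        exact this.le.trans (huσ (n + 1))
      · intro b hb
        refine hσ.2 ?_
        rintro y ⟨n, rfl⟩
        exact le_trans (hF2 i (u n)).le (hb ⟨n, rfl⟩)
    exact (hc i).1 _ (by rintro y ⟨n, rfl⟩; exact hF1 i (u n)) (Set.range_nonempty _) σ hlub
lemma ssn_club_inter (hreg : (#α).IsRegular) (hunc : ℵ₀ < #α)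
    (hinit : ∀ a : α, #(Set.Iio a) < #α) {c d : Set α}
    (hc : IsClubIn c) (hd : IsClubIn d) : IsClubIn (c ∩ d) := by
  have hcard : #(ULift.{u} Bool) < #α := by
    have : #(ULift.{u} Bool) < ℵ₀ := by
      rw [Cardinal.mk_fintype]
      exact_mod_cast Cardinal.nat_lt_aleph0 _
    exact lt_trans this hunc
  have h := ssn_club_iInter hreg hunc hinit (ι := ULift.{u} Bool) hcard
    (c := fun i => if i.down then c else d) (fun i => by cases i with
      | up b => cases b <;> simpa)
  have he : (⋂ i : ULift.{u} Bool, if i.down then c else d) = c ∩ d := by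
    ext x
    simp only [Set.mem_iInter, ULift.forall, Bool.forall_bool]
    constructor
    · rintro ⟨h1, h2⟩; exact ⟨by simpa using h2, by simpa using h1⟩
    · rintro ⟨h1, h2⟩; exact ⟨by simpa using h2, by simpa using h1⟩
  rwa [he] at h

lemma ssn_stat_mono {x y : Set α} (hxy : x ⊆ y) (hx : IsStatIn x) : IsStatIn y :=
  fun c hc => ((hx c hc).mono (Set.inter_subset_inter_left c hxy))

lemma ssn_stat_inter_club (hreg : (#α).IsRegular) (hunc : ℵ₀ < #α)
    (hinit : ∀ a : α, #(Set.Iio a) < #α) {x c : Set α}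
    (hx : IsStatIn x) (hc : IsClubIn c) : IsStatIn (x ∩ c) := by
  intro c' hc'
  have := hx (c ∩ c') (ssn_club_inter hreg hunc hinit hc hc')
  exact this.mono (by intro y hy; exact ⟨⟨hy.1, hy.2.1⟩, hy.2.2⟩)

lemma ssn_not_stat_iff {x : Set α} :
    ¬ IsStatIn x ↔ ∃ c : Set α, IsClubIn c ∧ x ∩ c = ∅ := by
  constructor
  · intro h
    rw [IsStatIn] at h
    push_neg at h
    obtain ⟨c, hc, hne⟩ := h
    exact ⟨c, hc, hne⟩
  · rintro ⟨c, hc, he⟩ h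
    have := h c hc
    rw [he] at this
    exact Set.not_nonempty_empty this

lemma ssn_not_stat_of_subset {x y : Set α} (hxy : x ⊆ y) (hy : ¬ IsStatIn y) :
    ¬ IsStatIn x := by
  rw [ssn_not_stat_iff] at *
  obtain ⟨c, hc, he⟩ := hy
  refine ⟨c, hc, Set.eq_empty_of_subset_empty ?_⟩
  have h2 : x ∩ c ⊆ y ∩ c := Set.inter_subset_inter_left c hxy
  rwa [he] at h2

lemma ssn_not_stat_union (hreg : (#α).IsRegular) (hunc : ℵ₀ < #α)
    (hinit : ∀ a : α, #(Set.Iio a) < #α) {x y : Set α}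
    (hx : ¬ IsStatIn x) (hy : ¬ IsStatIn y) : ¬ IsStatIn (x ∪ y) := by
  rw [ssn_not_stat_iff] at *
  obtain ⟨c, hc, hce⟩ := hx
  obtain ⟨d, hd, hde⟩ := hy
  refine ⟨c ∩ d, ssn_club_inter hreg hunc hinit hc hd, ?_⟩
  rw [Set.eq_empty_iff_forall_notMem]
  rintro z ⟨hz, hzc, hzd⟩
  rcases hz with hz | hz
  · exact Set.eq_empty_iff_forall_notMem.1 hce z ⟨hz, hzc⟩
  · exact Set.eq_empty_iff_forall_notMem.1 hde z ⟨hz, hzd⟩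

lemma ssn_stat_of_union (hreg : (#α).IsRegular) (hunc : ℵ₀ < #α)
    (hinit : ∀ a : α, #(Set.Iio a) < #α) {x y z : Set α}
    (hx : IsStatIn x) (hsub : x ⊆ y ∪ z) (hy : ¬ IsStatIn y) : IsStatIn z := by
  by_contra hz
  exact (ssn_not_stat_of_subset hsub (ssn_not_stat_union hreg hunc hinit hy hz)) hx

lemma ssn_stat_nonempty_above (hreg : (#α).IsRegular) (hunc : ℵ₀ < #α)
    (hinit : ∀ a : α, #(Set.Iio a) < #α) {x : Set α} (hx : IsStatIn x) (a : α) :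
    ∃ b ∈ x, a < b := by
  obtain ⟨b, hb, hab⟩ := hx _ (ssn_club_Ioi hreg hunc hinit a)
  exact ⟨b, hb, hab⟩

lemma ssn_not_stat_of_disj_club {x c : Set α} (hc : IsClubIn c) (h : x ∩ c = ∅) :
    ¬ IsStatIn x := ssn_not_stat_iff.2 ⟨c, hc, h⟩

/-- diagonal intersection of an `α`-indexed family of clubs -/
lemma ssn_club_diag (hreg : (#α).IsRegular) (hunc : ℵ₀ < #α)
    (hinit : ∀ a : α, #(Set.Iio a) < #α) {d : α → Set α}
    (hd : ∀ η, IsClubIn (d η)) : IsClubIn {β : α | ∀ η, η < β → β ∈ d η} := by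
  constructor
  · -- closed
    intro s hs hne b hb η hηb
    by_cases hbs : b ∈ s
    · exact hs hbs η hηb
    have ht : {e ∈ s | η < e}.Nonempty := by
      rw [Set.nonempty_def]
      by_contra h
      push_neg at h
      have hb2 : b ≤ η := hb.2 (fun e he => by
        by_contra hle
        exact h e ⟨he, lt_of_not_ge hle⟩)
      exact absurd hηb (not_lt_of_ge hb2)
    refine (hd η).1 {e ∈ s | η < e} (fun e he => hs he.1 η he.2) ht b ⟨?_, ?_⟩
    · exact fun e he => hb.1 he.1
    · intro b' hb'
      refine hb.2 fun e he => ?_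
      by_cases hηe : η < e
      · exact hb' ⟨he, hηe⟩
      · obtain ⟨e', he'⟩ := ht
        exact le_trans (le_of_not_gt hηe) (le_trans he'.2.le (hb' he'))
  · -- unbounded
    intro a
    have hstep : ∀ x : α, ∃ y, x < y ∧ ∀ η, η < x → y ∈ d η := by
      intro x
      have hclub : IsClubIn (⋂ η : Set.Iio x, d η) :=
        ssn_club_iInter hreg hunc hinit (hinit x) (fun η => hd η)
      obtain ⟨y, hy, hxy⟩ := hclub.2 x
      exact ⟨y, hxy, fun η hη => Set.mem_iInter.1 hy ⟨η, hη⟩⟩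
    choose step hstep1 hstep2 using hstep
    obtain ⟨u, hu_mono, hu0, hu_z, hu_succ⟩ := ssn_chain step (fun x => hstep1 x) a
    obtain ⟨σ, hσ⟩ := ssn_range_lub hreg hunc hinit u
    have huσ : ∀ n, u n ≤ σ := fun n => hσ.1 ⟨n, rfl⟩
    refine ⟨σ, ?_, lt_of_lt_of_le hu0 (huσ 0)⟩
    intro η hησ
    -- some u n exceeds η
    have hn : ∃ n, η < u n := by
      by_contra h
      push_neg at h
      exact absurd (hσ.2 fun y ⟨n, hy⟩ => hy ▸ h n) (not_le_of_gt hησ)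
    obtain ⟨n, hn⟩ := hn
    -- the tail beyond n lies in d η, with LUB σ
    have htail : ∀ m, n < m → u m ∈ d η := by
      intro m hm
      obtain ⟨k, rfl⟩ := Nat.exists_eq_add_of_lt hm
      rw [hu_succ]
      exact hstep2 _ η (lt_of_lt_of_le hn (hu_mono.le_iff_le.2 (Nat.le_add_right n k)))
    have hlub : IsLUB (Set.range fun m => u (m + n + 1)) σ := by
      constructor
      · rintro y ⟨m, rfl⟩; exact huσ _
      · intro b hb
        refine hσ.2 ?_
        rintro y ⟨m, rfl⟩
        exact le_trans (hu_mono.le_iff_le.2 (by omega : m ≤ m + n + 1)) (hb ⟨m, rfl⟩)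
    exact (hd η).1 _ (by rintro y ⟨m, rfl⟩; exact htail _ (by omega))
      (Set.range_nonempty _) σ hlub
/-- the set of "limit" elements -/
def ssnL (α : Type u) [LinearOrder α] : Set α := {β | IsLUB (Set.Iio β) β}

lemma ssn_club_L (hreg : (#α).IsRegular) (hunc : ℵ₀ < #α)
    (hinit : ∀ a : α, #(Set.Iio a) < #α) : IsClubIn (ssnL α) := by
  constructor
  · intro s hs hne b hb
    by_cases hbs : b ∈ s
    · exact hs hbs
    refine ⟨fun e he => he.le, fun b' hb' => hb.2 fun e he => ?_⟩
    have heb : e < b := lt_of_le_of_ne (hb.1 he) (fun h => hbs (h ▸ he))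
    exact hb' heb
  · intro a
    have hstep : ∀ x : α, ∃ y, x < y := fun x => ssn_exists_gt hreg hunc hinit x
    choose step hstep1 using hstep
    obtain ⟨u, hu_mono, hu0, _, _⟩ := ssn_chain step (fun x => hstep1 x) a
    obtain ⟨σ, hσ⟩ := ssn_range_lub hreg hunc hinit u
    have huσ : ∀ n, u n ≤ σ := fun n => hσ.1 ⟨n, rfl⟩
    have huσ' : ∀ n, u n < σ := fun n => lt_of_lt_of_le (hu_mono (Nat.lt_succ_self n)) (huσ _)
    refine ⟨σ, ⟨fun e he => he.le, fun b' hb' => ?_⟩, lt_of_lt_of_le hu0 (huσ 0)⟩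
    exact hσ.2 fun y ⟨n, hy⟩ => hy ▸ (hb' (huσ' n))
/-- accumulation points of `C` -/
def ssnAcc {α : Type u} [LinearOrder α] (C : Set α) : Set α :=
  {γ | ∃ s ⊆ C ∩ Set.Iio γ, s.Nonempty ∧ IsLUB s γ}

/-- elements of `β` of the form `sup` of a strictly increasing ω-chain -/
def ssnEow (α : Type u) [LinearOrder α] : Set α :=
  {β | ∃ u : ℕ → α, StrictMono u ∧ (∀ n, u n < β) ∧ IsLUB (Set.range u) β}

lemma ssn_acc_subset {C : Set α} (hC : IsClubIn C) : ssnAcc C ⊆ C := by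
  rintro γ ⟨s, hs, hne, hlub⟩
  exact hC.1 s (fun x hx => (hs hx).1) hne γ hlub

lemma ssn_club_acc (hreg : (#α).IsRegular) (hunc : ℵ₀ < #α)
    (hinit : ∀ a : α, #(Set.Iio a) < #α) {C : Set α} (hC : IsClubIn C) :
    IsClubIn (ssnAcc C) := by
  constructor
  · intro s hs hne b hb
    by_cases hbs : b ∈ s
    · exact hs hbs
    refine ⟨s, fun e he => ⟨ssn_acc_subset hC (hs he), ?_⟩, hne, hb⟩
    exact lt_of_le_of_ne (hb.1 he) (fun h => hbs (h ▸ he))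
  · intro a
    have hstep : ∀ x : α, ∃ y, y ∈ C ∧ x < y := by
      intro x; obtain ⟨y, hy, hxy⟩ := hC.2 x; exact ⟨y, hy, hxy⟩
    choose F hF1 hF2 using hstep
    obtain ⟨u, hu_mono, hu0, hu_z, hu_succ⟩ := ssn_chain F (fun x => hF2 x) a
    obtain ⟨σ, hσ⟩ := ssn_range_lub hreg hunc hinit u
    have huσ : ∀ n, u n ≤ σ := fun n => hσ.1 ⟨n, rfl⟩
    have huσ' : ∀ n, u n < σ := fun n => lt_of_lt_of_le (hu_mono (Nat.lt_succ_self n)) (huσ _)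
    have huC : ∀ n, u n ∈ C := by
      intro n
      cases n with
      | zero => rw [hu_z]; exact hF1 a
      | succ m => rw [hu_succ m]; exact hF1 (u m)
    refine ⟨σ, ⟨Set.range u, fun y ⟨n, hy⟩ => hy ▸ ⟨huC n, huσ' n⟩, Set.range_nonempty _, hσ⟩,
      lt_of_lt_of_le hu0 (huσ 0)⟩
/-- below a non-`ω`-limit accumulation point, accumulation points are unbounded -/
lemma ssn_acc_unbounded_below (hreg : (#α).IsRegular) (hunc : ℵ₀ < #α)
    (hinit : ∀ a : α, #(Set.Iio a) < #α) {C : Set α} {β : α}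
    (hβ : β ∈ ssnAcc C) (hβω : β ∉ ssnEow α) {η : α} (hη : η < β) :
    ∃ γ ∈ ssnAcc C, η < γ ∧ γ < β := by
  obtain ⟨s₀, hs₀, hs₀ne, hs₀lub⟩ := hβ
  -- elements of s₀ are unbounded below β
  have hub : ∀ x, x < β → ∃ e ∈ s₀, x < e := by
    intro x hx
    by_contra h
    push_neg at h
    exact absurd (hs₀lub.2 h) (not_le_of_gt hx)
  -- a total step function staying in s₀ below β
  have hstep : ∀ x : α, ∃ y, x < y ∧ (x < β → y ∈ s₀) := by
    intro x
    by_cases hx : x < β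
    · obtain ⟨e, he, hxe⟩ := hub x hx
      exact ⟨e, hxe, fun _ => he⟩
    · obtain ⟨y, hy⟩ := ssn_exists_gt hreg hunc hinit x
      exact ⟨y, hy, fun h => absurd h hx⟩
  choose F hF1 hF2 using hstep
  obtain ⟨e, he, hηe⟩ := hub η hη
  obtain ⟨u, hu_mono, hu0, hu_z, hu_succ⟩ := ssn_chain F (fun x => hF1 x) e
  have hus : ∀ n, u n ∈ s₀ := by
    intro n
    induction n with
    | zero => rw [hu_z]; exact hF2 e (hs₀ he).2
    | succ m ih => rw [hu_succ m]; exact hF2 (u m) (hs₀ ih).2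
  obtain ⟨σ, hσ⟩ := ssn_range_lub hreg hunc hinit u
  have huσ : ∀ n, u n ≤ σ := fun n => hσ.1 ⟨n, rfl⟩
  have huσ' : ∀ n, u n < σ := fun n => lt_of_lt_of_le (hu_mono (Nat.lt_succ_self n)) (huσ _)
  have hσβ : σ ≤ β := hσ.2 fun y ⟨n, hy⟩ => hy ▸ (hs₀ (hus n)).2.le
  have hσne : σ ≠ β := by
    intro h
    exact hβω ⟨u, hu_mono, fun n => h ▸ huσ' n, h ▸ hσ⟩
  refine ⟨σ, ⟨Set.range u, fun y ⟨n, hy⟩ => hy ▸ ⟨(hs₀ (hus n)).1, huσ' n⟩,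
    Set.range_nonempty _, hσ⟩, ?_, lt_of_le_of_ne hσβ hσne⟩
  exact lt_of_lt_of_le (lt_trans hηe hu0) (huσ 0)

/-- the trace lemma: inside a stationary set avoiding `ssnEow`, the set of points
carrying a "local club" disjoint from the set is stationary -/
lemma ssn_trace (hreg : (#α).IsRegular) (hunc : ℵ₀ < #α)
    (hinit : ∀ a : α, #(Set.Iio a) < #α) {A : Set α} (hA : IsStatIn A)
    (hAω : A ∩ ssnEow α = ∅) :
    IsStatIn {β ∈ A | ∃ d : Set α, d ⊆ Set.Iio β ∧ (∀ η, η < β → ∃ γ ∈ d, η < γ) ∧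
      (∀ s ⊆ d, s.Nonempty → ∀ γ, IsLUB s γ → γ < β → γ ∈ d) ∧ d ∩ A = ∅} := by
  intro C hC
  have hacc : IsClubIn (ssnAcc C) := ssn_club_acc hreg hunc hinit hC
  have hne : (A ∩ ssnAcc C).Nonempty := hA _ hacc
  set W := A ∩ ssnAcc C with hW
  let β := (IsWellFounded.wf (r := ((· < ·) : α → α → Prop))).min W hne
  have hβW : β ∈ W := (IsWellFounded.wf).min_mem W hne
  have hβmin : ∀ γ ∈ W, ¬ γ < β := fun γ hγ => (IsWellFounded.wf).not_lt_min W hγ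
  have hβω : β ∉ ssnEow α := by
    intro h
    exact Set.eq_empty_iff_forall_notMem.1 hAω β ⟨hβW.1, h⟩
  refine ⟨β, ⟨hβW.1, Set.Iio β ∩ ssnAcc C, fun γ hγ => hγ.1, ?_, ?_, ?_⟩,
    ssn_acc_subset hC hβW.2⟩
  · intro η hη
    obtain ⟨γ, hγ, hηγ, hγβ⟩ := ssn_acc_unbounded_below hreg hunc hinit hβW.2 hβω hη
    exact ⟨γ, ⟨hγβ, hγ⟩, hηγ⟩
  · intro s hs hsne γ hγlub hγβ
    refine ⟨hγβ, hacc.1 s (fun x hx => (hs hx).2) hsne γ hγlub⟩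
  · rw [Set.eq_empty_iff_forall_notMem]
    rintro γ ⟨⟨hγβ, hγacc⟩, hγA⟩
    exact hβmin γ ⟨hγA, hγacc⟩ hγβ
/-- if every element of a stationary set is the sup of a small uniformly-indexed family,
some coordinate is stationarily unbounded -/
lemma ssn_split2 (hreg : (#α).IsRegular) (hunc : ℵ₀ < #α)
    (hinit : ∀ a : α, #(Set.Iio a) < #α) {A : Set α} (hA : IsStatIn A)
    {I : Type u} (hI : #I < #α) {u : α → I → α}
    (hu : ∀ β ∈ A, IsLUB (Set.range (u β)) β) :
    ∃ i : I, ∀ η : α, IsStatIn {β ∈ A | η ≤ u β i} := by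
  by_contra h
  push_neg at h
  have h' : ∀ i : I, ∃ η : α, ∃ c : Set α, IsClubIn c ∧ {β ∈ A | η ≤ u β i} ∩ c = ∅ := by
    intro i
    obtain ⟨η, hη⟩ := h i
    obtain ⟨c, hc, hce⟩ := ssn_not_stat_iff.1 hη
    exact ⟨η, c, hc, hce⟩
  choose η c hc hce using h'
  obtain ⟨ηs, hηs⟩ := ssn_bound hreg hunc hinit (Set.range η)
    (lt_of_le_of_lt Cardinal.mk_range_le hI)
  have hC : IsClubIn ((⋂ i, c i) ∩ Set.Ioi ηs) :=
    ssn_club_inter hreg hunc hinit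
      (ssn_club_iInter hreg hunc hinit hI hc) (ssn_club_Ioi hreg hunc hinit ηs)
  obtain ⟨β, hβA, hβC⟩ := hA _ hC
  have hub : ηs ∈ upperBounds (Set.range (u β)) := by
    rintro y ⟨i, rfl⟩
    have hβci : β ∈ c i := Set.mem_iInter.1 hβC.1 i
    have : ¬ η i ≤ u β i := fun hle =>
      Set.eq_empty_iff_forall_notMem.1 (hce i) β ⟨⟨hβA, hle⟩, hβci⟩
    exact le_trans (lt_of_not_ge this).le (hηs (η i) ⟨i, rfl⟩).le
  exact absurd ((hu β hβA).2 hub) (not_le_of_gt hβC.2)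

/-- from a regressive function that is stationarily unbounded, extract a split -/
lemma ssn_split1 (hreg : (#α).IsRegular) (hunc : ℵ₀ < #α)
    (hinit : ∀ a : α, #(Set.Iio a) < #α) {A : Set α} (hA : IsStatIn A)
    {f : α → α} (hf : ∀ β ∈ A, f β < β)
    (hstat : ∀ η : α, IsStatIn {β ∈ A | η ≤ f β}) :
    ∃ y : Set α, IsStatIn (A ∩ y) ∧ IsStatIn (A \ y) := by
  have hlow : ∃ η : α, IsStatIn {β ∈ A | f β < η} := by
    by_contra h
    push_neg at h
    have h' : ∀ η : α, ∃ c : Set α, IsClubIn c ∧ {β ∈ A | f β ≤ η} ∩ c = ∅ := by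
      intro η
      obtain ⟨η', hη'⟩ := ssn_exists_gt hreg hunc hinit η
      obtain ⟨c, hc, hce⟩ := ssn_not_stat_iff.1 (h η')
      refine ⟨c, hc, Set.eq_empty_iff_forall_notMem.2 ?_⟩
      rintro β ⟨⟨hβA, hβle⟩, hβc⟩
      exact Set.eq_empty_iff_forall_notMem.1 hce β ⟨⟨hβA, lt_of_le_of_lt hβle hη'⟩, hβc⟩
    choose c hc hce using h'
    have hΔ : IsClubIn {β : α | ∀ η, η < β → β ∈ c η} := ssn_club_diag hreg hunc hinit hc
    obtain ⟨β, hβA, hβΔ⟩ := hA _ hΔ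
    have hfβ : f β < β := hf β hβA
    exact Set.eq_empty_iff_forall_notMem.1 (hce (f β)) β ⟨⟨hβA, le_refl _⟩, hβΔ (f β) hfβ⟩
  obtain ⟨η, hη⟩ := hlow
  refine ⟨{β | η ≤ f β}, ?_, ?_⟩
  · have := hstat η
    refine ssn_stat_mono (fun β hβ => ⟨hβ.1, hβ.2⟩) this
  · refine ssn_stat_mono (fun β (hβ : β ∈ {β ∈ A | f β < η}) => ?_) hη
    exact ⟨hβ.1, fun h => absurd hβ.2 (not_lt_of_ge h)⟩
/-- Fodor-style lemma for the non-splitting "ultrafilter" -/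
lemma ssn_vfodor (hreg : (#α).IsRegular) (hunc : ℵ₀ < #α)
    (hinit : ∀ a : α, #(Set.Iio a) < #α) {A : Set α} (hA : IsStatIn A)
    (hns : ∀ y : Set α, ¬ (IsStatIn (A ∩ y) ∧ IsStatIn (A \ y)))
    {f : α → α} {y₀ : Set α} (hy₀ : ¬ IsStatIn (A \ y₀))
    (hf : ∀ β ∈ A ∩ y₀, f β < β) :
    ∃ γ : α, ¬ IsStatIn (A \ {β | f β = γ}) := by
  by_contra h
  push_neg at h
  have h' : ∀ γ : α, ∃ c : Set α, IsClubIn c ∧ (A ∩ {β | f β = γ}) ∩ c = ∅ := by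
    intro γ
    have : ¬ IsStatIn (A ∩ {β | f β = γ}) := fun hs => hns {β | f β = γ} ⟨hs, h γ⟩
    exact ssn_not_stat_iff.1 this
  choose c hc hce using h'
  obtain ⟨c₀, hc₀, hc₀e⟩ := ssn_not_stat_iff.1 hy₀
  have hΔ : IsClubIn ({β : α | ∀ η, η < β → β ∈ c η} ∩ c₀) :=
    ssn_club_inter hreg hunc hinit (ssn_club_diag hreg hunc hinit hc) hc₀
  obtain ⟨β, hβA, hβΔ, hβc₀⟩ := hA _ hΔ
  have hβy₀ : β ∈ y₀ := by
    by_contra hβy₀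
    exact Set.eq_empty_iff_forall_notMem.1 hc₀e β ⟨⟨hβA, hβy₀⟩, hβc₀⟩
  have hfβ : f β < β := hf β ⟨hβA, hβy₀⟩
  exact Set.eq_empty_iff_forall_notMem.1 (hce (f β)) β ⟨⟨hβA, rfl⟩, hβΔ (f β) hfβ⟩

/-- Solovay-type theorem: every stationary set splits into two stationary pieces. -/
theorem ssn_split_all (hreg : (#α).IsRegular) (hunc : ℵ₀ < #α)
    (hinit : ∀ a : α, #(Set.Iio a) < #α) {T : Set α} (hT : IsStatIn T) :
    ∃ y : Set α, IsStatIn (T ∩ y) ∧ IsStatIn (T \ y) := by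
  by_contra hns0
  push_neg at hns0
  have hns : ∀ y : Set α, ¬ (IsStatIn (T ∩ y) ∧ IsStatIn (T \ y)) :=
    fun y hy => (hns0 y hy.1) hy.2
  have hsub : ∀ A : Set α, A ⊆ T → ∀ y : Set α,
      ¬ (IsStatIn (A ∩ y) ∧ IsStatIn (A \ y)) := by
    rintro A hAT y ⟨h1, h2⟩
    exact hns y ⟨ssn_stat_mono (Set.inter_subset_inter_left y hAT) h1,
      ssn_stat_mono (fun β hβ => ⟨hAT hβ.1, hβ.2⟩) h2⟩
  by_cases hcase : IsStatIn (T ∩ ssnEow α)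
  · -- case 1: stationarily many ω-limits
    set A := T ∩ ssnEow α with hA
    have hAT : A ⊆ T := Set.inter_subset_left
    let U : α → ℕ → α := fun β =>
      if h : β ∈ ssnEow α then Classical.choose h else fun _ => β
    have hU : ∀ β ∈ ssnEow α, StrictMono (U β) ∧ (∀ n, U β n < β) ∧
        IsLUB (Set.range (U β)) β := by
      intro β h
      have hspec := Classical.choose_spec h
      simp only [U, dif_pos h]
      exact hspec
    have hNat : #(ULift.{u} ℕ) < #α := lt_of_le_of_lt Cardinal.mk_le_aleph0 hunc
    obtain ⟨i, hi⟩ := ssn_split2 hreg hunc hinit hcase hNat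
      (u := fun β (i : ULift.{u} ℕ) => U β i.down)
      (fun β hβ => by
        have : Set.range (fun (i : ULift.{u} ℕ) => U β i.down) = Set.range (U β) := by
          ext y
          exact ⟨fun ⟨j, hj⟩ => ⟨j.down, hj⟩, fun ⟨n, hn⟩ => ⟨ULift.up n, hn⟩⟩
        rw [this]
        exact (hU β hβ.2).2.2)
    obtain ⟨y, hy1, hy2⟩ := ssn_split1 hreg hunc hinit hcase
      (f := fun β => U β i.down)
      (fun β hβ => (hU β hβ.2).2.1 i.down) hi
    exact hsub A hAT y ⟨hy1, hy2⟩
  · -- case 2: concentrate on non-ω-limits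
    have hL : IsClubIn (ssnL α) := ssn_club_L hreg hunc hinit
    set A' := (T ∩ ssnL α) \ ssnEow α with hA'def
    have hA' : IsStatIn A' := by
      refine ssn_stat_of_union hreg hunc hinit
        (ssn_stat_inter_club hreg hunc hinit hT hL) ?_ hcase
      intro β hβ
      by_cases h : β ∈ ssnEow α
      · exact Or.inl ⟨hβ.1, h⟩
      · exact Or.inr ⟨hβ, h⟩
    have hA'T : A' ⊆ T := fun β hβ => hβ.1.1
    have hA'L : A' ⊆ ssnL α := fun β hβ => hβ.1.2
    have hA'ω : A' ∩ ssnEow α = ∅ := by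
      rw [Set.eq_empty_iff_forall_notMem]
      rintro β ⟨hβ, hβω⟩
      exact hβ.2 hβω
    -- the trace set
    set P : α → Prop := fun β => ∃ d : Set α, d ⊆ Set.Iio β ∧
      (∀ η, η < β → ∃ γ ∈ d, η < γ) ∧
      (∀ s ⊆ d, s.Nonempty → ∀ γ, IsLUB s γ → γ < β → γ ∈ d) ∧ d ∩ A' = ∅ with hPdef
    set A'' : Set α := {β ∈ A' | P β} with hA''def
    have hA'' : IsStatIn A'' := ssn_trace hreg hunc hinit hA' hA'ω
    have hA''T : A'' ⊆ T := fun β hβ => hA'T hβ.1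
    let D : α → Set α := fun β => if h : P β then Classical.choose h else ∅
    have hD : ∀ β, P β → D β ⊆ Set.Iio β ∧ (∀ η, η < β → ∃ γ ∈ D β, η < γ) ∧
        (∀ s ⊆ D β, s.Nonempty → ∀ γ, IsLUB s γ → γ < β → γ ∈ D β) ∧ D β ∩ A' = ∅ := by
      intro β h
      have hspec := Classical.choose_spec h
      simp only [D, dif_pos h]
      exact hspec
    -- the regressive selectors
    let g : α → α → α := fun η β =>
      if h : ∃ γ, γ ∈ D β ∧ η < γ then
        (IsWellFounded.wf (r := ((· < ·) : α → α → Prop))).min {γ | γ ∈ D β ∧ η < γ}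
          (by obtain ⟨γ, hγ⟩ := h; exact ⟨γ, hγ⟩)
      else β
    have hg : ∀ η β, β ∈ A'' → η < β → g η β ∈ D β ∧ η < g η β ∧ g η β < β := by
      intro η β hβ hηβ
      obtain ⟨γ, hγ, hηγ⟩ := (hD β hβ.2).2.1 η hηβ
      have hex : ∃ γ, γ ∈ D β ∧ η < γ := ⟨γ, hγ, hηγ⟩
      have hmem : g η β ∈ {γ | γ ∈ D β ∧ η < γ} := by
        simp only [g, dif_pos hex]
        exact (IsWellFounded.wf).min_mem _ _
      exact ⟨hmem.1, hmem.2, (hD β hβ.2).1 hmem.1⟩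
    -- Fodor for each η
    have hfod : ∀ η : α, ∃ γ : α, ¬ IsStatIn (A'' \ {β | g η β = γ}) := by
      intro η
      refine ssn_vfodor hreg hunc hinit hA'' (hsub A'' hA''T) (y₀ := Set.Ioi η) ?_
        (fun β hβ => (hg η β hβ.1 hβ.2).2.2)
      refine ssn_not_stat_of_disj_club (ssn_club_Ioi hreg hunc hinit η) ?_
      rw [Set.eq_empty_iff_forall_notMem]
      rintro β ⟨⟨_, hβ1⟩, hβ2⟩
      exact hβ1 hβ2
    choose γv hγv using hfod
    -- each γv η is above η
    have hγgt : ∀ η : α, η < γv η := by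
      intro η
      have hstat : IsStatIn (A'' ∩ {β | g η β = γv η}) := by
        refine ssn_stat_of_union hreg hunc hinit hA'' ?_ (hγv η)
        intro β hβ
        by_cases h : g η β = γv η
        · exact Or.inr ⟨hβ, h⟩
        · exact Or.inl ⟨hβ, h⟩
      obtain ⟨β, ⟨hβA, hβg⟩, hβη⟩ := hstat _ (ssn_club_Ioi hreg hunc hinit η)
      have := (hg η β hβA hβη).2.1
      rwa [hβg] at this
    -- almost all β agree with the canonical values
    have h' : ∀ η : α, ∃ c : Set α, IsClubIn c ∧ (A'' \ {β | g η β = γv η}) ∩ c = ∅ :=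
      fun η => ssn_not_stat_iff.1 (hγv η)
    choose e he hee using h'
    have hΔ : IsClubIn {β : α | ∀ η, η < β → β ∈ e η} := ssn_club_diag hreg hunc hinit he
    have hB : IsStatIn (A'' ∩ {β : α | ∀ η, η < β → β ∈ e η}) :=
      ssn_stat_inter_club hreg hunc hinit hA'' hΔ
    have hBgood : ∀ β ∈ A'' ∩ {β : α | ∀ η, η < β → β ∈ e η}, ∀ η, η < β → g η β = γv η := by
      intro β hβ η hηβ
      by_contra h
      exact Set.eq_empty_iff_forall_notMem.1 (hee η) β ⟨⟨hβ.1, h⟩, hβ.2 η hηβ⟩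
    -- pick two elements
    have : Nonempty α := ssn_nonempty hunc
    obtain ⟨a₀⟩ := this
    obtain ⟨β₁, hβ₁, ha₀β₁⟩ := ssn_stat_nonempty_above hreg hunc hinit hB a₀
    obtain ⟨β₂, hβ₂, hβ₁β₂⟩ := ssn_stat_nonempty_above hreg hunc hinit hB β₁
    -- the canonical values below β₁ accumulate at β₁ inside D β₂
    set s : Set α := {γ : α | ∃ η, η < β₁ ∧ γ = γv η} with hsdef
    have hsD : s ⊆ D β₂ := by
      rintro γ ⟨η, hηβ₁, rfl⟩
      have := hBgood β₂ hβ₂ η (lt_trans hηβ₁ hβ₁β₂)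
      rw [← this]
      exact (hg η β₂ hβ₂.1 (lt_trans hηβ₁ hβ₁β₂)).1
    have hsne : s.Nonempty := ⟨γv a₀, a₀, ha₀β₁, rfl⟩
    have hslub : IsLUB s β₁ := by
      constructor
      · rintro γ ⟨η, hηβ₁, rfl⟩
        have := hBgood β₁ hβ₁ η hηβ₁
        rw [← this]
        exact ((hD β₁ hβ₁.1.2).1 (hg η β₁ hβ₁.1 hηβ₁).1).le
      · intro b hb
        have hβ₁L : IsLUB (Set.Iio β₁) β₁ := hA'L hβ₁.1.1
        refine hβ₁L.2 fun η hη => ?_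
        exact le_trans (hγgt η).le (hb ⟨η, hη, rfl⟩)
    have hβ₁D : β₁ ∈ D β₂ :=
      (hD β₂ hβ₂.1.2).2.2.1 s hsD hsne β₁ hslub hβ₁β₂
    exact Set.eq_empty_iff_forall_notMem.1 (hD β₂ hβ₂.1.2).2.2.2 β₁ ⟨hβ₁D, hβ₁.1.1⟩
/-- For a regular uncountable cardinal `κ`, the stationary splitting number satisfies
`s^cl_κ ≥ κ` if and only if `κ` is inaccessible. Here `κ` is represented as a well-ordered
type `α` of regular uncountable cardinality all of whose proper initial segments are of size
`< #α`. -/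
theorem statSplittingNumber_ge_iff_inaccessible {α : Type*} [LinearOrder α] [WellFoundedLT α]
    (hreg : (#α).IsRegular) (hunc : ℵ₀ < #α)
    (hinit : ∀ a : α, #(Set.Iio a) < #α) :
    #α ≤ statSplittingNumber α ↔ (#α).IsInaccessible := by
  have hne : Nonempty α := ssn_nonempty hunc
  constructor
  · -- if the splitting number is large, κ is a strong limit
    intro hle
    refine ⟨hunc, hreg.2, ?_⟩
    intro lam hlam
    by_contra hpow
    rw [not_lt] at hpow
    -- build a small splitting family from an injection into 2^lam
    have hcard : (2 : Cardinal) ^ lam = #(lam.out → ULift.{_} Bool) := by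
      rw [← Cardinal.power_def, Cardinal.mk_out]
      congr 1
      rw [Cardinal.mk_fintype]
      simp
    rw [hcard] at hpow
    obtain ⟨emb⟩ := (Cardinal.le_def _ _).1 hpow
    set S : Set (Set α) :=
      {y : Set α | (∃ i b, y = {β : α | emb β i = b}) ∧ IsStatIn y} with hSdef
    have hSstat : ∀ y ∈ S, IsStatIn y := fun y hy => hy.2
    have hSsplit : ∀ x : Set α, IsStatIn x → ∃ y ∈ S, StatSplits y x := by
      intro x hx
      by_contra h
      push_neg at h
      -- for each coordinate, one value is non-stationary in x
      have hbi : ∀ i : lam.out, ∃ b : ULift Bool, ¬ IsStatIn (x ∩ {β | emb β i = b}) := by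
        intro i
        by_contra hb
        push_neg at hb
        have hy : IsStatIn (x ∩ {β | emb β i = ULift.up true}) := hb _
        have hy' : IsStatIn (x \ {β | emb β i = ULift.up true}) := by
          refine ssn_stat_mono ?_ (hb (ULift.up false))
          rintro β ⟨hβx, hβf⟩
          refine ⟨hβx, fun hβt => ?_⟩
          simp only [Set.mem_setOf_eq] at hβf hβt
          rw [hβf] at hβt
          simp at hβt
        have hyS : {β : α | emb β i = ULift.up true} ∈ S :=
          ⟨⟨i, ULift.up true, rfl⟩, ssn_stat_mono Set.inter_subset_right hy⟩
        exact h _ hyS ⟨hy, hy'⟩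
      choose b hb using hbi
      have hce : ∀ i, ∃ c : Set α, IsClubIn c ∧ (x ∩ {β | emb β i = b i}) ∩ c = ∅ :=
        fun i => ssn_not_stat_iff.1 (hb i)
      choose c hc hcee using hce
      have hlamout : #lam.out < #α := by rwa [Cardinal.mk_out]
      have hC : IsClubIn (⋂ i, c i) := ssn_club_iInter hreg hunc hinit hlamout hc
      have hxC : IsStatIn (x ∩ ⋂ i, c i) := ssn_stat_inter_club hreg hunc hinit hx hC
      obtain ⟨β, hβ, _⟩ := hxC _ (ssn_club_univ hreg hunc hinit)
      obtain ⟨β', hβ', hββ'⟩ := ssn_stat_nonempty_above hreg hunc hinit hxC β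
      have hvne : ∀ δ, δ ∈ x ∩ (⋂ i, c i) → ∀ i, emb δ i ≠ b i := by
        rintro δ ⟨hδx, hδC⟩ i heq
        exact Set.eq_empty_iff_forall_notMem.1 (hcee i) δ
          ⟨⟨hδx, heq⟩, Set.mem_iInter.1 hδC i⟩
      have hemb : emb β = emb β' := by
        funext i
        have h1 := hvne β hβ i
        have h2 := hvne β' hβ' i
        have hboolb : ∀ v w z : Bool, v ≠ z → w ≠ z → v = w := by decide
        cases hA : emb β i with | up v => ?_
        cases hB : emb β' i with | up w => ?_
        cases hZ : b i with | up z => ?_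
        rw [hA] at h1
        rw [hB] at h2
        rw [hZ] at h1 h2
        have hvw : v = w := hboolb v w z (fun hh => h1 (by rw [hh]))
          (fun hh => h2 (by rw [hh]))
        rw [hvw]
      exact absurd (emb.injective hemb) (ne_of_lt hββ')
    -- the family is small
    have hS_le : #S < #α := by
      have hsub : S ⊆ Set.range (fun p : lam.out × ULift Bool =>
          {β : α | emb β p.1 = p.2}) := by
        rintro y ⟨⟨i, b, rfl⟩, _⟩
        exact ⟨(i, b), rfl⟩
      refine lt_of_le_of_lt (Cardinal.mk_le_mk_of_subset hsub) ?_
      refine lt_of_le_of_lt Cardinal.mk_range_le ?_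
      have : #(lam.out × ULift Bool) = #lam.out * #(ULift Bool) := by
        rw [Cardinal.mk_prod]
        simp
      rw [this]
      refine Cardinal.mul_lt_of_lt hunc.le (by rwa [Cardinal.mk_out]) ?_
      have : #(ULift Bool) < ℵ₀ := by
        rw [Cardinal.mk_fintype]
        exact_mod_cast Cardinal.nat_lt_aleph0 _
      exact lt_trans this hunc
    have hmem : #S ∈ { c : Cardinal | ∃ S : Set (Set α), (∀ y ∈ S, IsStatIn y) ∧
        (∀ x : Set α, IsStatIn x → ∃ y ∈ S, StatSplits y x) ∧ c = #S } :=
      ⟨S, hSstat, hSsplit, rfl⟩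
    have := csInf_le' hmem
    rw [statSplittingNumber] at hle
    exact absurd (lt_of_le_of_lt (hle.trans this) hS_le) (lt_irrefl _)
  · -- if κ is inaccessible, every small family fails to split
    intro hin
    rw [statSplittingNumber]
    apply le_csInf
    · -- the collection is nonempty: all stationary sets form a splitting family
      refine ⟨#{y : Set α | IsStatIn y}, {y : Set α | IsStatIn y}, fun y hy => hy, ?_, rfl⟩
      intro x hx
      obtain ⟨y, hy1, hy2⟩ := ssn_split_all hreg hunc hinit hx
      refine ⟨x ∩ y, hy1, ?_, ?_⟩
      · exact ssn_stat_mono (fun β hβ => ⟨hβ.1, hβ⟩) hy1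
      · exact ssn_stat_mono (fun β hβ => ⟨hβ.1, fun h => hβ.2 h.2⟩) hy2
    · rintro b ⟨S, hSstat, hSsplit, rfl⟩
      by_contra hlt
      rw [not_le] at hlt
      -- the coloring by membership pattern
      set F : α → Set ↥S := fun β => {y : ↥S | β ∈ (y : Set α)} with hFdef
      have hfib : ∃ s : Set ↥S, IsStatIn (F ⁻¹' {s}) := by
        by_contra hf
        push_neg at hf
        have hce : ∀ s : Set ↥S, ∃ c : Set α, IsClubIn c ∧ (F ⁻¹' {s}) ∩ c = ∅ :=
          fun s => ssn_not_stat_iff.1 (hf s)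
        choose c hc hcee using hce
        have hcard : #(Set ↥S) < #α := by
          rw [Cardinal.mk_set]
          exact hin.3 hlt
        have hC : IsClubIn (⋂ s, c s) := ssn_club_iInter hreg hunc hinit hcard hc
        obtain ⟨β, hβ, _⟩ := hC.2 (Classical.arbitrary α)
        exact Set.eq_empty_iff_forall_notMem.1 (hcee (F β)) β
          ⟨rfl, Set.mem_iInter.1 hβ (F β)⟩
      obtain ⟨s, hs⟩ := hfib
      obtain ⟨y, hyS, hsp1, hsp2⟩ := hSsplit _ hs
      obtain ⟨β, hβ, _⟩ := hsp1 _ (ssn_club_univ hreg hunc hinit)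
      obtain ⟨β', hβ', _⟩ := hsp2 _ (ssn_club_univ hreg hunc hinit)
      have hFβ : F β = s := hβ.1
      have hFβ' : F β' = s := hβ'.1
      have hmem : (⟨y, hyS⟩ : ↥S) ∈ F β := hβ.2
      rw [hFβ, ← hFβ'] at hmem
      exact hβ'.2 hmem
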